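/- In a Clos topology, the probability v_b that a bad link (one that causes a retransmission with probability r_b whenever a connection traverses it) receives a vote is at least r_b/(n0*n1*npod), provided n0 ≥ n2 and npod ≥ 1 + n2(n0-1)/(n0(n0-n2)). -/
import Mathlib


/-- In a Clos topology, the probability `vb` that a bad link (causing a
retransmission with probability `rb` whenever a connection traverses it) receives
a vote is at least the minimum link-traversal probability times `rb`; under
`n0 > n2` and `npod ≥ 1 + n2(n0-1)/(n0(n0-n2))` this yields
`vb ≥ rb/(n0*n1*npod)`. -/
theorem bad_link_vote_lower_bound
    (n0 n1 n2 npod : ℕ)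
    (h1 : 1 ≤ n1) (h2 : 1 ≤ n2) (h02 : n2 < n0) (hp : 2 ≤ npod)
    (hpod : (npod : ℝ) ≥ 1 + (n2 : ℝ) * ((n0 : ℝ) - 1) / ((n0 : ℝ) * ((n0 : ℝ) - n2)))
    (rb vb : ℝ) (hrb : 0 ≤ rb)
    (hvb : vb ≥ min (1 / ((n0 : ℝ) * n1 * npod))
        ((1 / ((n1 : ℝ) * n2 * npod)) *
          (((n0 : ℝ) * ((npod : ℝ) - 1)) / ((n0 : ℝ) * npod - 1))) * rb) :
    vb ≥ rb / ((n0 : ℝ) * n1 * npod) := by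
  have ha : (2:ℝ) ≤ (n0:ℝ) := by
    have : 2 ≤ n0 := lt_of_le_of_lt h2 h02
    exact_mod_cast this
  have hb : (1:ℝ) ≤ (n1:ℝ) := by exact_mod_cast h1
  have hc : (1:ℝ) ≤ (n2:ℝ) := by exact_mod_cast h2
  have hac : (n2:ℝ) < (n0:ℝ) := by exact_mod_cast h02
  have hpR : (2:ℝ) ≤ (npod:ℝ) := by exact_mod_cast hp
  set a := (n0 : ℝ)
  set b := (n1 : ℝ)
  set c := (n2 : ℝ)
  set p := (npod : ℝ)
  have hap : (0:ℝ) < a * p - 1 := by nlinarith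
  have hpos1 : (0:ℝ) < a * b * p := by nlinarith
  have hpos2 : (0:ℝ) < b * c * p * (a * p - 1) := mul_pos (by nlinarith) hap
  have hden : (0:ℝ) < a * (a - c) := by nlinarith
  have hpod' : c * (a - 1) ≤ (p - 1) * (a * (a - c)) :=
    (div_le_iff₀ hden).mp (by linarith : c * (a - 1) / (a * (a - c)) ≤ p - 1)
  have hkey : 1 / (a * b * p) ≤ (1 / (b * c * p)) * ((a * (p - 1)) / (a * p - 1)) := by
    rw [div_mul_div_comm, one_mul, div_le_div_iff₀ hpos1 hpos2]
    nlinarith [hpod', hb, hpos1]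
  have hmin : min (1 / (a * b * p)) ((1 / (b * c * p)) * ((a * (p - 1)) / (a * p - 1)))
      = 1 / (a * b * p) := min_eq_left hkey
  rw [hmin] at hvb
  calc vb ≥ 1 / (a * b * p) * rb := hvb
    _ = rb / (a * b * p) := by ring
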